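/- Fix d ≥ 2, 0 < β ≤ 1, and Q > 0. If f: [0,1]^d → ℝ satisfies |f(x) − f(y)| ≤ Q ‖x − y‖_∞^β for all x, y ∈ [0,1]^d, then the outer function g = f ∘ Φ^{-1} of the Cantor-set KA representation satisfies |g(x) − g(y)| ≤ 2^β Q |x − y|^{β log 2/(d log 3)} for all x, y in the image of Φ. -/

import Mathlib

set_option maxHeartbeats 1000000

open Set Filter Topology MeasureTheory

noncomputable section

/-- The unit cube `[0,1]^d`. -/
def cube (d : ℕ) : Set (Fin d → ℝ) := {x | ∀ p, x p ∈ Set.Icc (0:ℝ) 1}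

/-- The Cantor middle-thirds set: reals admitting a ternary expansion with digits in `{0,2}`. -/
def CantorSet : Set ℝ :=
  {y | ∃ t : ℕ → ℕ, (∀ j, t j = 0 ∨ t j = 2) ∧ y = ∑' j : ℕ, (t j : ℝ) / 3 ^ (j + 1)}

/-- `a` assigns to each `x ∈ [0,1]` a fixed binary expansion (`a x j` is the digit `a_{j+1}^x`). -/
def IsBinaryExp (a : ℝ → ℕ → ℕ) : Prop :=
  ∀ x ∈ Set.Icc (0:ℝ) 1, (∀ j, a x j ≤ 1) ∧ x = ∑' j : ℕ, (a x j : ℝ) / 2 ^ (j + 1)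

/-- `φ(x) = ∑_{j≥1} 2 a_j^x 3^{-d(j-1)}`. -/
def phiFun (d : ℕ) (a : ℝ → ℕ → ℕ) (x : ℝ) : ℝ := ∑' j : ℕ, (2 * a x j : ℝ) / 3 ^ (d * j)

/-- `Φ(x_1,…,x_d) = ∑_{p=1}^d 3^{-p} φ(x_p)`. -/
def PhiFun (d : ℕ) (a : ℝ → ℕ → ℕ) (x : Fin d → ℝ) : ℝ :=
  ∑ p : Fin d, phiFun d a (x p) / 3 ^ ((p : ℕ) + 1)

namespace Stmt8

lemma summable_of_abs_le_geom {c : ℕ → ℝ} {C r : ℝ} (hr0 : 0 ≤ r) (hr1 : r < 1)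
    (h : ∀ k, |c k| ≤ C * r ^ k) : Summable c :=
  (((summable_geometric_of_lt_one hr0 hr1).mul_left C).of_nonneg_of_le
    (fun k => abs_nonneg _) h).of_abs

lemma tsum_geom_tail {b : ℝ} (hb : 2 ≤ b) (C : ℝ) (J : ℕ) :
    ∑' k : ℕ, C / b ^ (k + J + 1) = C / (b - 1) / b ^ J := by
  have hb0 : (0:ℝ) < b := by linarith
  have hb1 : b - 1 ≠ 0 := by intro h; nlinarith
  have h1 : (1:ℝ)/b < 1 := by rw [div_lt_one hb0]; linarith
  have key : ∀ k : ℕ, C / b ^ (k + J + 1) = (C / b ^ (J+1)) * (1/b)^k := by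
    intro k
    rw [div_pow, one_pow, show k + J + 1 = k + (J+1) by ring, pow_add]
    field_simp
  rw [tsum_congr key, tsum_mul_left, tsum_geometric_of_lt_one (by positivity) h1]
  have hbJ : b ^ J ≠ 0 := by positivity
  field_simp
  ring

lemma summable_digit {b : ℝ} (hb : 2 ≤ b) (s : ℕ → ℕ) (C : ℕ) (hs : ∀ k, s k ≤ C) :
    Summable (fun k => (s k : ℝ) / b ^ (k+1)) := by
  have hb0 : (0:ℝ) < b := by linarith
  apply summable_of_abs_le_geom (C := C/b) (r := 1/b) (by positivity)
    (by rw [div_lt_one hb0]; linarith)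
  intro k
  rw [abs_of_nonneg (by positivity), div_pow, one_pow, div_mul_div_comm, ← pow_succ']
  have : (s k : ℝ) ≤ C := by exact_mod_cast hs k
  gcongr
  simpa using this

lemma summable_digit_sub {b : ℝ} (hb : 2 ≤ b) (s t : ℕ → ℕ) (C : ℕ)
    (hs : ∀ k, s k ≤ C) (ht : ∀ k, t k ≤ C) :
    Summable (fun k => ((s k:ℝ) - t k) / b ^ (k+1)) :=
  ((summable_digit hb s C hs).sub (summable_digit hb t C ht)).congr
    fun k => (sub_div _ _ _).symm

lemma digit_sub_tsum {b : ℝ} (hb : 2 ≤ b) (s t : ℕ → ℕ) (C : ℕ)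
    (hs : ∀ k, s k ≤ C) (ht : ∀ k, t k ≤ C) :
    (∑' k, (s k:ℝ)/b^(k+1)) - ∑' k, (t k:ℝ)/b^(k+1)
      = ∑' k, ((s k:ℝ) - t k)/b^(k+1) := by
  rw [← Summable.tsum_sub (summable_digit hb s C hs) (summable_digit hb t C ht)]
  exact tsum_congr fun k => (sub_div _ _ _).symm

lemma tail_abs_le {b : ℝ} (hb : 2 ≤ b) (s t : ℕ → ℕ) (C : ℕ)
    (hs : ∀ k, s k ≤ C) (ht : ∀ k, t k ≤ C) (J : ℕ) :
    |∑' k : ℕ, ((s (k+J):ℝ) - t (k+J))/b^(k+J+1)| ≤ (C/(b-1))/b^J := by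
  have hb0 : (0:ℝ) < b := by linarith
  have hsum : Summable (fun k => ((s k:ℝ) - t k) / b ^ (k+1)) :=
    summable_digit_sub hb s t C hs ht
  have hsum' : Summable (fun k => ((s (k+J):ℝ) - t (k+J)) / b ^ (k+J+1)) := by
    have := (summable_nat_add_iff J).2 hsum
    exact this.congr fun k => by ring_nf
  have habs : ∀ k : ℕ, |((s (k+J):ℝ) - t (k+J))/b^(k+J+1)| ≤ (C:ℝ)/b^(k+J+1) := by
    intro k
    rw [abs_div, abs_of_nonneg (by positivity : (0:ℝ) ≤ b^(k+J+1))]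
    gcongr
    rw [abs_sub_le_iff]
    constructor
    · have h1 : (s (k+J):ℝ) ≤ C := by exact_mod_cast hs _
      have h2 : (0:ℝ) ≤ t (k+J) := by positivity
      linarith
    · have h1 : (t (k+J):ℝ) ≤ C := by exact_mod_cast ht _
      have h2 : (0:ℝ) ≤ s (k+J) := by positivity
      linarith
  calc |∑' k : ℕ, ((s (k+J):ℝ) - t (k+J))/b^(k+J+1)|
      ≤ ∑' k : ℕ, |((s (k+J):ℝ) - t (k+J))/b^(k+J+1)| := by
        simpa only [Real.norm_eq_abs] using
          norm_tsum_le_tsum_norm (f := fun k => ((s (k+J):ℝ) - t (k+J))/b^(k+J+1))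
          (by simpa only [Real.norm_eq_abs] using hsum'.abs)
    _ ≤ ∑' k : ℕ, (C:ℝ)/b^(k+J+1) := by
        refine Summable.tsum_le_tsum habs hsum'.abs ?_
        exact (summable_nat_add_iff J).2 (summable_digit hb (fun _ => C) C (fun _ => le_rfl)) |>.congr
          (fun k => by ring_nf)
    _ = (C/(b-1))/b^J := tsum_geom_tail hb C J

lemma digits_close {b : ℝ} (hb : 2 ≤ b) (s t : ℕ → ℕ) (C : ℕ)
    (hs : ∀ k, s k ≤ C) (ht : ∀ k, t k ≤ C) (J : ℕ) (h : ∀ k < J, s k = t k) :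
    |(∑' k, (s k:ℝ)/b^(k+1)) - ∑' k, (t k:ℝ)/b^(k+1)| ≤ (C/(b-1)) / b ^ J := by
  rw [digit_sub_tsum hb s t C hs ht]
  have hsum : Summable (fun k => ((s k:ℝ) - t k) / b ^ (k+1)) :=
    summable_digit_sub hb s t C hs ht
  have hsplit := Summable.sum_add_tsum_nat_add (f := fun k => ((s k:ℝ) - t k) / b ^ (k+1)) J hsum
  have hpre : ∑ k ∈ Finset.range J, ((s k:ℝ) - t k) / b ^ (k+1) = 0 := by
    apply Finset.sum_eq_zero
    intro k hk
    rw [h k (Finset.mem_range.1 hk)]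
    simp
  rw [← hsplit, hpre, zero_add]
  exact tail_abs_le hb s t C hs ht J

lemma cantor_sep (s t : ℕ → ℕ) (hs : ∀ k, s k ≤ 2) (ht : ∀ k, t k ≤ 2)
    (m : ℕ) (hs2 : s m = 2) (ht0 : t m = 0) (h : ∀ k < m, s k = t k) :
    1/3^(m+1) ≤ (∑' k, (s k:ℝ)/3^(k+1)) - ∑' k, (t k:ℝ)/3^(k+1) := by
  have hb : (2:ℝ) ≤ 3 := by norm_num
  rw [digit_sub_tsum hb s t 2 hs ht]
  have hsum : Summable (fun k => ((s k:ℝ) - t k) / (3:ℝ) ^ (k+1)) :=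
    summable_digit_sub hb s t 2 hs ht
  have hsplit := Summable.sum_add_tsum_nat_add (f := fun k => ((s k:ℝ) - t k) / (3:ℝ) ^ (k+1)) (m+1) hsum
  have hpre : ∑ k ∈ Finset.range (m+1), ((s k:ℝ) - t k) / (3:ℝ) ^ (k+1) = 2/3^(m+1) := by
    rw [Finset.sum_range_succ]
    have : ∑ k ∈ Finset.range m, ((s k:ℝ) - t k) / (3:ℝ) ^ (k+1) = 0 := by
      apply Finset.sum_eq_zero
      intro k hk
      rw [h k (Finset.mem_range.1 hk)]
      simp
    rw [this, zero_add, hs2, ht0]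
    norm_num
  have htail := tail_abs_le hb s t 2 hs ht (m+1)
  have h2 : ((2:ℕ):ℝ)/((3:ℝ)-1)/3^(m+1) = 1/3^(m+1) := by norm_num
  rw [h2] at htail
  have := abs_le.1 htail
  beta_reduce at hsplit
  rw [← hsplit, hpre]
  have hr : (2:ℝ)/3^(m+1) - 1/3^(m+1) = 1/3^(m+1) := by ring
  linarith [this.1]

/-- the `m`-th ternary digit of `Φ(x)` -/
def dig (d : ℕ) (hd : 0 < d) (a : ℝ → ℕ → ℕ) (x : Fin d → ℝ) (m : ℕ) : ℕ :=
  2 * a (x ⟨m % d, Nat.mod_lt m hd⟩) (m / d)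

lemma dig_le {d : ℕ} (hd : 0 < d) {a : ℝ → ℕ → ℕ} (ha : IsBinaryExp a)
    {x : Fin d → ℝ} (hx : x ∈ cube d) (m : ℕ) : dig d hd a x m ≤ 2 := by
  have := (ha _ (hx ⟨m % d, Nat.mod_lt m hd⟩)).1 (m / d)
  unfold dig
  omega

lemma dig_vals {d : ℕ} (hd : 0 < d) {a : ℝ → ℕ → ℕ} (ha : IsBinaryExp a)
    {x : Fin d → ℝ} (hx : x ∈ cube d) (m : ℕ) :
    dig d hd a x m = 0 ∨ dig d hd a x m = 2 := by
  have := (ha _ (hx ⟨m % d, Nat.mod_lt m hd⟩)).1 (m / d)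
  unfold dig
  omega

lemma dig_apply {d : ℕ} (hd : 0 < d) (a : ℝ → ℕ → ℕ) (x : Fin d → ℝ) (j : ℕ) (q : Fin d) :
    dig d hd a x (j * d + (q:ℕ)) = 2 * a (x q) j := by
  have hmod : (j * d + (q:ℕ)) % d = (q:ℕ) := by
    rw [Nat.add_comm, Nat.add_mul_mod_self_right, Nat.mod_eq_of_lt q.isLt]
  have hdiv : (j * d + (q:ℕ)) / d = j := by
    rw [Nat.add_comm, Nat.add_mul_div_right _ _ hd, Nat.div_eq_of_lt q.isLt, Nat.zero_add]
  have hfin : (⟨(j * d + (q:ℕ)) % d, Nat.mod_lt _ hd⟩ : Fin d) = q :=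
    Fin.val_injective hmod
  simp only [dig, hdiv, hfin]

lemma phi_eq_tsum_dig {d : ℕ} (hd : 0 < d) {a : ℝ → ℕ → ℕ} (ha : IsBinaryExp a)
    {x : Fin d → ℝ} (hx : x ∈ cube d) :
    PhiFun d a x = ∑' m : ℕ, (dig d hd a x m : ℝ) / 3 ^ (m + 1) := by
  haveI : NeZero d := ⟨hd.ne'⟩
  set F : ℕ → ℝ := fun m => (dig d hd a x m : ℝ) / 3 ^ (m + 1) with hF
  have hFsum : Summable F := summable_digit (by norm_num) _ 2 (dig_le hd ha hx)
  set e : Fin d × ℕ ≃ ℕ := (Equiv.prodComm _ _).trans (Nat.divModEquiv d).symm with he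
  have hval : ∀ (p : Fin d) (j : ℕ),
      F (e (p, j)) = (2 * a (x p) j : ℝ) / 3 ^ (j * d + (p:ℕ) + 1) := by
    intro p j
    have hee : e (p, j) = j * d + (p:ℕ) := rfl
    rw [hF]
    simp only [hee, dig_apply hd a x j p]
    push_cast
    ring
  have h1 : ∑' m, F m = ∑' q : Fin d × ℕ, F (e q) := (e.tsum_eq F).symm
  have hsum2 : Summable (fun q : Fin d × ℕ => F (e q)) := e.summable_iff.2 hFsum
  have h2 : ∑' q : Fin d × ℕ, F (e q) = ∑' p : Fin d, ∑' j : ℕ, F (e (p, j)) :=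
    Summable.tsum_prod' hsum2 (fun p => hsum2.prod_factor p)
  rw [h1, h2, tsum_fintype]
  unfold PhiFun
  apply Finset.sum_congr rfl
  intro p _
  rw [tsum_congr (hval p), phiFun, ← tsum_div_const]
  apply tsum_congr
  intro j
  rw [div_div, ← pow_add, Nat.mul_comm d j]
  congr 2

lemma key {d : ℕ} (hd : 2 ≤ d) {a : ℝ → ℕ → ℕ} (ha : IsBinaryExp a)
    {x y : Fin d → ℝ} (hx : x ∈ cube d) (hy : y ∈ cube d) (q : Fin d) :
    |x q - y q| ≤ 2 * |PhiFun d a x - PhiFun d a y| ^ (Real.log 2 / (d * Real.log 3)) := by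
  classical
  have hd0 : 0 < d := by omega
  have hl2 : (0:ℝ) < Real.log 2 := Real.log_pos (by norm_num)
  have hl3 : (0:ℝ) < Real.log 3 := Real.log_pos (by norm_num)
  have hdR : (0:ℝ) < (d:ℝ) := by exact_mod_cast hd0
  set γ := Real.log 2 / (d * Real.log 3) with hγ
  have hγpos : 0 < γ := div_pos hl2 (by positivity)
  by_cases hall : ∀ m, dig d hd0 a x m = dig d hd0 a y m
  · have hxy : x q = y q := by
      rw [(ha _ (hx q)).2, (ha _ (hy q)).2]
      apply tsum_congr
      intro j
      have := hall (j * d + (q:ℕ))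
      rw [dig_apply hd0 a x j q, dig_apply hd0 a y j q] at this
      have : a (x q) j = a (y q) j := by omega
      rw [this]
    rw [hxy, sub_self, abs_zero]
    positivity
  · push_neg at hall
    have hex : ∃ m, dig d hd0 a x m ≠ dig d hd0 a y m := hall
    set m := Nat.find hex with hm
    have hne : dig d hd0 a x m ≠ dig d hd0 a y m := Nat.find_spec hex
    have hmin : ∀ k < m, dig d hd0 a x k = dig d hd0 a y k := fun k hk =>
      not_not.1 (Nat.find_min hex (hm ▸ hk))
    -- separation in the image
    have hsep : (1:ℝ)/3^(m+1) ≤ |PhiFun d a x - PhiFun d a y| := by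
      rw [phi_eq_tsum_dig hd0 ha hx, phi_eq_tsum_dig hd0 ha hy]
      rcases dig_vals hd0 ha hx m with h1 | h1 <;> rcases dig_vals hd0 ha hy m with h2 | h2
      · omega
      · rw [abs_sub_comm]
        exact le_trans (cantor_sep _ _ (dig_le hd0 ha hy) (dig_le hd0 ha hx) m h2 h1
          (fun k hk => (hmin k hk).symm)) (le_abs_self _)
      · exact le_trans (cantor_sep _ _ (dig_le hd0 ha hx) (dig_le hd0 ha hy) m h1 h2 hmin)
          (le_abs_self _)
      · omega
    -- binary closeness of the coordinates
    set j := m / d with hj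
    have hbin : |x q - y q| ≤ 1/2^j := by
      have hagree : ∀ k < j, a (x q) k = a (y q) k := by
        intro k hk
        have hlt : k * d + (q:ℕ) < m := by
          have h1 : k * d + (q:ℕ) < (k+1) * d := by
            have := q.isLt; nlinarith
          have h2 : (k+1) * d ≤ j * d := Nat.mul_le_mul_right d (by omega)
          have h3 : j * d ≤ m := Nat.div_mul_le_self m d
          omega
        have := hmin _ hlt
        rw [dig_apply hd0 a x k q, dig_apply hd0 a y k q] at this
        omega
      have := digits_close (b := 2) (by norm_num) (a (x q)) (a (y q)) 1
        (ha _ (hx q)).1 (ha _ (hy q)).1 j hagree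
      rw [← (ha _ (hx q)).2, ← (ha _ (hy q)).2] at this
      calc |x q - y q| ≤ ((1:ℕ)/((2:ℝ)-1))/2^j := this
        _ = 1/2^j := by norm_num
    -- compare the two scales
    have hmd : (m:ℝ) + 1 ≤ ((j:ℝ) + 1) * d := by
      have h0 : d * j + m % d = m := by rw [hj]; exact Nat.div_add_mod m d
      have hlt : m % d + 1 ≤ d := Nat.mod_lt m hd0
      have h3 : m + 1 ≤ (j + 1) * d := by
        calc m + 1 = d * j + m % d + 1 := by rw [h0]
          _ = d * j + (m % d + 1) := by ring
          _ ≤ d * j + d := Nat.add_le_add_left hlt _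
          _ = (j + 1) * d := by ring
      exact_mod_cast h3
    have hstep : (1:ℝ)/2^j ≤ 2 * |PhiFun d a x - PhiFun d a y| ^ γ := by
      have h1 : ((1:ℝ)/3^(m+1))^γ ≤ |PhiFun d a x - PhiFun d a y| ^ γ :=
        Real.rpow_le_rpow (by positivity) hsep hγpos.le
      have h2 : ((1:ℝ)/3^(m+1))^γ = Real.exp (-(((m:ℝ)+1) * Real.log 2 / d)) := by
        have e1 : ((1:ℝ)/3^(m+1)) = (3:ℝ) ^ (-(((m:ℕ)+1:ℕ):ℝ)) := by
          rw [Real.rpow_neg (by norm_num), Real.rpow_natCast]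
          norm_num
        rw [e1, ← Real.rpow_mul (by norm_num : (0:ℝ) ≤ 3),
          Real.rpow_def_of_pos (by norm_num : (0:ℝ) < 3)]
        congr 1
        rw [hγ]
        push_cast
        field_simp
      have h3 : Real.exp (-(((j:ℝ)+1) * Real.log 2)) ≤ Real.exp (-(((m:ℝ)+1) * Real.log 2 / d)) := by
        rw [Real.exp_le_exp, neg_le_neg_iff, div_le_iff₀ hdR]
        nlinarith
      have h4 : Real.exp (-(((j:ℝ)+1) * Real.log 2)) = 1/2^(j+1) := by
        rw [Real.exp_neg]
        have hc : ((j:ℝ)+1) = ((j+1:ℕ):ℝ) := by push_cast; ring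
        rw [hc, Real.exp_nat_mul, Real.exp_log (by norm_num : (0:ℝ) < 2), one_div]
      have h5 : (1:ℝ)/2^j = 2 * (1/2^(j+1)) := by
        rw [pow_succ]
        ring
      rw [h5, ← h4]
      have := le_trans (le_trans (h4 ▸ h3) (le_of_eq h2.symm)) h1
      nlinarith [Real.exp_pos (-(((j:ℝ)+1) * Real.log 2))]
    calc |x q - y q| ≤ 1/2^j := hbin
      _ ≤ 2 * |PhiFun d a x - PhiFun d a y| ^ γ := hstep

end Stmt8

theorem stmt8 (d : ℕ) (hd : 2 ≤ d) (β Q : ℝ) (hβ0 : 0 < β) (hβ1 : β ≤ 1) (hQ : 0 < Q)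
    (a : ℝ → ℕ → ℕ) (ha : IsBinaryExp a) (f : (Fin d → ℝ) → ℝ)
    (hf : ∀ x ∈ cube d, ∀ y ∈ cube d, |f x - f y| ≤ Q * ‖x - y‖ ^ β) :
    ∀ x ∈ PhiFun d a '' cube d, ∀ y ∈ PhiFun d a '' cube d,
      |f (Function.invFunOn (PhiFun d a) (cube d) x) -
          f (Function.invFunOn (PhiFun d a) (cube d) y)|
        ≤ 2 ^ β * Q * |x - y| ^ (β * Real.log 2 / (d * Real.log 3)) := by
  rintro u ⟨x0, hx0, rfl⟩ v ⟨y0, hy0, rfl⟩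
  set x' := Function.invFunOn (PhiFun d a) (cube d) (PhiFun d a x0) with hx'def
  set y' := Function.invFunOn (PhiFun d a) (cube d) (PhiFun d a y0) with hy'def
  have hx' : x' ∈ cube d := Function.invFunOn_mem ⟨x0, hx0, rfl⟩
  have hy' : y' ∈ cube d := Function.invFunOn_mem ⟨y0, hy0, rfl⟩
  have hΦx : PhiFun d a x' = PhiFun d a x0 := Function.invFunOn_eq ⟨x0, hx0, rfl⟩
  have hΦy : PhiFun d a y' = PhiFun d a y0 := Function.invFunOn_eq ⟨y0, hy0, rfl⟩
  set γ := Real.log 2 / (d * Real.log 3) with hγ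
  set D := |PhiFun d a x0 - PhiFun d a y0| with hD
  have hDnn : 0 ≤ D := abs_nonneg _
  have hnorm : ‖x' - y'‖ ≤ 2 * D ^ γ := by
    rw [pi_norm_le_iff_of_nonneg (by positivity)]
    intro q
    have h := Stmt8.key hd ha hx' hy' q
    rw [hΦx, hΦy] at h
    simpa [Real.norm_eq_abs] using h
  calc |f x' - f y'| ≤ Q * ‖x' - y'‖ ^ β := hf x' hx' y' hy'
    _ ≤ Q * (2 * D ^ γ) ^ β := by
        exact mul_le_mul_of_nonneg_left
          (Real.rpow_le_rpow (norm_nonneg _) hnorm hβ0.le) hQ.le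
    _ = 2 ^ β * Q * D ^ (β * Real.log 2 / (d * Real.log 3)) := by
        rw [Real.mul_rpow (by norm_num) (by positivity), ← Real.rpow_mul hDnn]
        have hee : γ * β = β * Real.log 2 / (↑d * Real.log 3) := by rw [hγ]; ring
        rw [hee]
        ring

end
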